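/- There exist a continuous increasing function M : [0,∞) → (0,∞) with M ≥ m₀ > 0 and nonnegative C² functions u̲, ū on [0,π] vanishing at 0 and π, such that −M(‖ū‖²)ū'' ≥ −M(‖u̲‖²)u̲'' on (0,π) but u̲ ≰ ū; i.e., the comparison principle for Kirchhoff operators with increasing M fails. -/

import Mathlib

open Real Set intervalIntegral

/-- Dirichlet energy of a function on `(0, π)`. -/
noncomputable def energy (u : ℝ → ℝ) : ℝ := ∫ x in (0 : ℝ)..π, (deriv u x) ^ 2

lemma usup_hasDerivAt (x : ℝ) :
    HasDerivAt (fun x : ℝ => (2/5) * (π * x - x ^ 2)) ((2/5) * (π - 2 * x)) x := by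
  have h : HasDerivAt (fun x : ℝ => π * x - x ^ 2) (π - 2 * x) x := by
    have h1 : HasDerivAt (fun x : ℝ => π * x) π x := by
      simpa using (hasDerivAt_id x).const_mul π
    have h2 : HasDerivAt (fun x : ℝ => x ^ 2) (2 * x) x := by
      simpa using hasDerivAt_pow 2 x
    simpa using h1.fun_sub h2
  exact h.const_mul (2/5)

lemma usup_deriv : deriv (fun x : ℝ => (2/5) * (π * x - x ^ 2)) = fun x => (2/5) * (π - 2 * x) := by
  funext x; exact (usup_hasDerivAt x).deriv

lemma usup_deriv2 (x : ℝ) : deriv (deriv (fun x : ℝ => (2/5) * (π * x - x ^ 2))) x = -(4/5) := by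
  rw [usup_deriv]
  have h : HasDerivAt (fun x : ℝ => (2/5) * (π - 2 * x)) (-(4/5)) x := by
    have h0 : HasDerivAt (fun x : ℝ => π - 2 * x) (-2) x := by
      simpa using (hasDerivAt_const x π).fun_sub ((hasDerivAt_id x).const_mul 2)
    have := h0.const_mul (2/5)
    exact this.congr_deriv (by ring)
  exact h.deriv

lemma energy_usup : energy (fun x : ℝ => (2/5) * (π * x - x ^ 2)) = 4 * π ^ 3 / 75 := by
  unfold energy
  rw [usup_deriv]
  have key : ∀ x ∈ uIcc (0:ℝ) π,
      HasDerivAt (fun x : ℝ => -(2/75) * (π - 2 * x) ^ 3) (((2/5) * (π - 2 * x)) ^ 2) x := by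
    intro x _
    have h0 : HasDerivAt (fun x : ℝ => π - 2 * x) (-2) x := by
      simpa using (hasDerivAt_const x π).fun_sub ((hasDerivAt_id x).const_mul 2)
    have h1 := (h0.pow 3).const_mul (-(2/75))
    exact h1.congr_deriv (by push_cast; ring)
  have hint : IntervalIntegrable (fun x : ℝ => ((2/5) * (π - 2 * x)) ^ 2) MeasureTheory.volume 0 π := by
    apply Continuous.intervalIntegrable; continuity
  rw [intervalIntegral.integral_eq_sub_of_hasDerivAt key hint]
  ring

lemma energy_usub : energy Real.sin = π / 2 := by
  unfold energy
  simp only [Real.deriv_sin]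
  rw [integral_cos_sq]
  simp

/-- The comparison principle fails for Kirchhoff operators with an increasing `M`. -/
theorem comparison_fails_for_increasing_M :
    ∃ (M : ℝ → ℝ) (m₀ : ℝ) (usub usup : ℝ → ℝ),
      0 < m₀ ∧ Continuous M ∧ StrictMonoOn M (Ici 0) ∧
      (∀ t ∈ Ici (0 : ℝ), m₀ ≤ M t) ∧
      ContDiffOn ℝ 2 usub (Icc 0 π) ∧ ContDiffOn ℝ 2 usup (Icc 0 π) ∧
      (∀ x ∈ Icc (0 : ℝ) π, 0 ≤ usub x) ∧ (∀ x ∈ Icc (0 : ℝ) π, 0 ≤ usup x) ∧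
      usub 0 = 0 ∧ usub π = 0 ∧ usup 0 = 0 ∧ usup π = 0 ∧
      (∀ x ∈ Ioo (0 : ℝ) π,
          -(M (energy usub) * deriv (deriv usub) x) ≤
            -(M (energy usup) * deriv (deriv usup) x)) ∧
      ¬ (∀ x ∈ Icc (0 : ℝ) π, usub x ≤ usup x) := by
  refine ⟨fun t => t ^ 10 + 1, 1, Real.sin, fun x : ℝ => (2/5) * (π * x - x ^ 2),
    one_pos, by continuity, ?_, ?_, ?_, ?_, ?_, ?_, by simp, by simp, by simp [pow_two], by simp [pow_two], ?_, ?_⟩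
  · intro a ha b hb hab
    have := pow_lt_pow_left₀ hab ha (n := 10) (by norm_num)
    simpa using this
  · intro t ht
    simpa using pow_nonneg ht 10
  · exact Real.contDiff_sin.contDiffOn
  · have : ContDiff ℝ 2 (fun x : ℝ => (2/5) * (π * x - x ^ 2)) := by
      apply ContDiff.mul contDiff_const
      exact (contDiff_const.mul contDiff_id).sub (contDiff_id.pow 2)
    exact this.contDiffOn
  · intro x hx; exact Real.sin_nonneg_of_nonneg_of_le_pi hx.1 hx.2
  · intro x hx
    have h1 : 0 ≤ x := hx.1
    have h2 : x ≤ π := hx.2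
    nlinarith
  · intro x hx
    rw [energy_usub, energy_usup]
    have hd1 : deriv (deriv Real.sin) x = -Real.sin x := by
      rw [Real.deriv_sin]; exact Real.deriv_cos
    rw [hd1, usup_deriv2]
    have hsin : Real.sin x ≤ 1 := Real.sin_le_one x
    have hsin0 : 0 ≤ Real.sin x := Real.sin_nonneg_of_nonneg_of_le_pi hx.1.le hx.2.le
    -- goal: ((π/2)^10+1) * sin x ≤ (4/5) * ((4π³/75)^10 + 1)
    have key : ((π/2:ℝ)^10 + 1) ≤ (4/5) * ((4 * π ^ 3 / 75)^10 + 1) := by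
      have hpi : (3.1415:ℝ) < π := by
        have := Real.pi_gt_d6; linarith
      have h2 : (21/20:ℝ) ≤ 8 * π ^ 2 / 75 := by nlinarith
      have h3 : (4 * π ^ 3 / 75 : ℝ) = (8 * π ^ 2 / 75) * (π / 2) := by ring
      have hX : (1:ℝ) ≤ (π/2)^10 := one_le_pow₀ (by linarith : (1:ℝ) ≤ π/2)
      have hB : ((21/20:ℝ))^10 ≤ (8 * π ^ 2 / 75)^10 :=
        pow_le_pow_left₀ (by norm_num) h2 10
      have h6 : (1.6:ℝ) ≤ (21/20:ℝ)^10 := by norm_num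
      rw [h3, mul_pow]
      nlinarith [mul_le_mul_of_nonneg_right hB (le_trans zero_le_one hX),
        mul_le_mul_of_nonneg_right h6 (le_trans zero_le_one hX)]
    have hM0 : (0:ℝ) ≤ (π/2)^10 + 1 := by positivity
    nlinarith [mul_le_mul_of_nonneg_left hsin hM0]
  · intro h
    have := h (π/2) ⟨by positivity, by linarith [Real.pi_pos]⟩
    rw [Real.sin_pi_div_two] at this
    have hpi : π < 3.15 := by
      have := Real.pi_lt_d2; linarith
    nlinarith [Real.pi_pos]
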